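/- Let d ≥ 1, let C be a finite set of classes, let λ > 0, and let ν be the law of a random vector ε ∈ ℝ^d whose d coordinates are independent, each with the Laplace distribution of scale λ, i.e., with probability density t ↦ (2λ)⁻¹ exp(−|t|/λ) with respect to Lebesgue measure on ℝ. Let f : ℝ^d → C be a measurable classifier, let x ∈ ℝ^d, let c_A ∈ C, and let p_A ∈ (1/2, 1) be such that ℙ_{ε∼ν}(f(x+ε) = c_A) ≥ p_A and ℙ_{ε∼ν}(f(x+ε) = c) ≤ 1 − p_A for every class c ≠ c_A. Then for every δ ∈ ℝ^d with ‖δ‖_1 < −λ·log(2(1 − p_A)) and every class c ≠ c_A, ℙ_{ε∼ν}(f(x+δ+ε) = c_A) > ℙ_{ε∼ν}(f(x+δ+ε) = c). -/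

import Mathlib

open MeasureTheory

open Real Set
open scoped ENNReal

noncomputable def lapD (lam t : ℝ) : ℝ≥0∞ :=
  ENNReal.ofReal ((2 * lam)⁻¹ * Real.exp (-|t| / lam))

lemma integrable_lap_exp {lam : ℝ} (hlam : 0 < lam) :
    Integrable (fun t : ℝ => Real.exp (-|t| / lam)) := by
  have heq : ∀ t : ℝ, Real.exp (-|t| / lam) = Real.exp (-lam⁻¹ * |t|) := by
    intro t; ring_nf
  have h1 : IntegrableOn (fun t : ℝ => Real.exp (-lam⁻¹ * t)) (Ioi 0) :=
    exp_neg_integrableOn_Ioi 0 (inv_pos.2 hlam)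
  have h1' : IntegrableOn (fun t : ℝ => Real.exp (-lam⁻¹ * |t|)) (Ioi 0) := by
    refine h1.congr_fun (fun t ht => ?_) measurableSet_Ioi
    rw [abs_of_pos ht]
  have h2 : IntegrableOn (fun t : ℝ => Real.exp (-lam⁻¹ * |t|)) (Iic 0) := by
    rw [← Measure.map_neg_eq_self (volume : Measure ℝ)]
    have m : MeasurableEmbedding fun x : ℝ => -x :=
      (Homeomorph.neg ℝ).measurableEmbedding
    rw [m.integrableOn_map_iff]
    simp_rw [Function.comp_def, abs_neg, neg_preimage, neg_Iic, neg_zero]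
    exact (integrableOn_Ici_iff_integrableOn_Ioi).mpr h1'
  have : Integrable (fun t : ℝ => Real.exp (-lam⁻¹ * |t|)) := by
    rw [← integrableOn_univ, ← Iic_union_Ioi (a := (0:ℝ))]
    exact h2.union h1'
  exact this.congr (Filter.Eventually.of_forall fun t => (heq t).symm)

lemma lintegral_lapD {lam : ℝ} (hlam : 0 < lam) : ∫⁻ t, lapD lam t = 1 := by
  have h2lam : (0:ℝ) < 2 * lam := by linarith
  have hnn : 0 ≤ᵐ[volume] fun t : ℝ => (2 * lam)⁻¹ * Real.exp (-|t| / lam) :=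
    Filter.Eventually.of_forall fun t =>
      mul_nonneg (inv_nonneg.2 h2lam.le) (exp_pos _).le
  have hint : Integrable (fun t : ℝ => (2 * lam)⁻¹ * Real.exp (-|t| / lam)) :=
    (integrable_lap_exp hlam).const_mul _
  have key : ∫ t : ℝ, (2 * lam)⁻¹ * Real.exp (-|t| / lam) = 1 := by
    rw [integral_const_mul]
    have habs : ∫ t : ℝ, Real.exp (-|t| / lam) = 2 * ∫ t in Ioi (0:ℝ), Real.exp (-t / lam) :=
      integral_comp_abs (f := fun y => Real.exp (-y / lam))
    have hIoi : ∫ t in Ioi (0:ℝ), Real.exp (-t / lam) = lam := by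
      have : ∀ t : ℝ, Real.exp (-t / lam) = Real.exp (-(lam⁻¹ * t)) := by
        intro t; ring_nf
      simp_rw [this]
      rw [integral_comp_mul_left_Ioi (fun y => Real.exp (-y)) 0 (inv_pos.2 hlam)]
      simp only [mul_zero, inv_inv, integral_exp_neg_Ioi_zero, smul_eq_mul, mul_one]
    rw [habs, hIoi]
    field_simp
  unfold lapD
  rw [← ofReal_integral_eq_lintegral_ofReal hint hnn, key, ENNReal.ofReal_one]

lemma measurable_lapD (lam : ℝ) : Measurable (lapD lam) := by
  unfold lapD; measurability

lemma lintegral_pi_prod {n : ℕ} (F : Fin n → ℝ → ℝ≥0∞) (hF : ∀ i, Measurable (F i)) :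
    ∫⁻ y, ∏ i, F i (y i) ∂(Measure.pi fun _ : Fin n => (volume : Measure ℝ)) =
      ∏ i, ∫⁻ t, F i t := by
  induction n with
  | zero => simp
  | succ n ih =>
    have hmp := (measurePreserving_piFinSuccAbove
      (fun _ : Fin (n+1) => (volume : Measure ℝ)) 0).symm
    rw [← hmp.lintegral_comp_emb (MeasurableEquiv.measurableEmbedding _)]
    simp_rw [MeasurableEquiv.piFinSuccAbove_symm_apply, Fin.insertNthEquiv,
      Fin.prod_univ_succ, Fin.insertNth_zero]
    simp only [Equiv.coe_fn_mk, Fin.cons_zero, Fin.cons_succ, Fin.zero_succAbove, cast_eq]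
    have hg : Measurable fun y : Fin n → ℝ => ∏ j : Fin n, F j.succ (y j) :=
      Finset.measurable_prod _ fun j _ => (hF j.succ).comp (measurable_pi_apply j)
    rw [lintegral_prod_mul (hF 0).aemeasurable hg.aemeasurable,
      ih _ (fun j => hF j.succ)]

instance lapD_sigmaFinite (lam : ℝ) :
    SigmaFinite ((volume : Measure ℝ).withDensity (lapD lam)) :=
  SigmaFinite.withDensity_of_ne_top
    (Filter.Eventually.of_forall fun _ => ENNReal.ofReal_ne_top)

lemma pi_lapD_eq {d : ℕ} (lam : ℝ) :
    Measure.pi (fun _ : Fin d => (volume : Measure ℝ).withDensity (lapD lam)) =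
      (volume : Measure (Fin d → ℝ)).withDensity (fun y => ∏ i, lapD lam (y i)) := by
  refine Measure.pi_eq fun s hs => ?_
  rw [withDensity_apply _ (MeasurableSet.univ_pi hs)]
  have hind : ∀ y : Fin d → ℝ,
      (univ.pi s).indicator (fun y => ∏ i, lapD lam (y i)) y =
        ∏ i, (s i).indicator (lapD lam) (y i) := by
    intro y
    by_cases hy : y ∈ univ.pi s
    · rw [indicator_of_mem hy]
      exact Finset.prod_congr rfl fun i _ =>
        (indicator_of_mem (hy i (Set.mem_univ i)) _).symm
    · rw [indicator_of_notMem hy]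
      simp only [Set.mem_pi, Set.mem_univ, true_implies, not_forall] at hy
      obtain ⟨i, hi⟩ := hy
      exact (Finset.prod_eq_zero (Finset.mem_univ i) (indicator_of_notMem hi _)).symm
  calc ∫⁻ y in univ.pi s, ∏ i, lapD lam (y i) ∂(volume : Measure (Fin d → ℝ))
      = ∫⁻ y, ∏ i, (s i).indicator (lapD lam) (y i) ∂(volume : Measure (Fin d → ℝ)) := by
        rw [← lintegral_indicator (MeasurableSet.univ_pi hs)]
        exact lintegral_congr hind
    _ = ∏ i, ∫⁻ t, (s i).indicator (lapD lam) t := by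
        rw [volume_pi]
        exact lintegral_pi_prod _ fun i => (measurable_lapD lam).indicator (hs i)
    _ = ∏ i, (volume : Measure ℝ).withDensity (lapD lam) (s i) := by
        refine Finset.prod_congr rfl fun i _ => ?_
        rw [withDensity_apply _ (hs i), lintegral_indicator (hs i)]

-- pointwise likelihood ratio bound
lemma lapD_shift_le {lam : ℝ} (hlam : 0 < lam) (t s : ℝ) :
    lapD lam (t - s) ≤ ENNReal.ofReal (Real.exp (|s| / lam)) * lapD lam t := by
  unfold lapD
  rw [← ENNReal.ofReal_mul (exp_pos _).le]
  refine ENNReal.ofReal_le_ofReal ?_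
  rw [mul_comm (Real.exp (|s| / lam)), mul_assoc, ← Real.exp_add]
  refine mul_le_mul_of_nonneg_left ?_ (by positivity)
  refine Real.exp_le_exp.2 ?_
  rw [← add_div, div_le_div_iff_of_pos_right hlam]
  have := abs_sub_abs_le_abs_sub t s
  linarith

lemma prod_lapD_shift_le {d : ℕ} {lam : ℝ} (hlam : 0 < lam) (δ y : Fin d → ℝ) :
    ∏ i, lapD lam (y i - δ i) ≤
      ENNReal.ofReal (Real.exp ((∑ i, |δ i|) / lam)) * ∏ i, lapD lam (y i) := by
  calc ∏ i, lapD lam (y i - δ i)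
      ≤ ∏ i, (ENNReal.ofReal (Real.exp (|δ i| / lam)) * lapD lam (y i)) :=
        Finset.prod_le_prod' fun i _ => lapD_shift_le hlam (y i) (δ i)
    _ = (∏ i, ENNReal.ofReal (Real.exp (|δ i| / lam))) * ∏ i, lapD lam (y i) :=
        Finset.prod_mul_distrib
    _ = ENNReal.ofReal (Real.exp ((∑ i, |δ i|) / lam)) * ∏ i, lapD lam (y i) := by
        rw [← ENNReal.ofReal_prod_of_nonneg (fun i _ => (exp_pos _).le),
          ← Real.exp_sum, Finset.sum_div]

lemma shift_bound {d : ℕ} {lam : ℝ} (hlam : 0 < lam) (δ : Fin d → ℝ)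
    {S : Set (Fin d → ℝ)} (hS : MeasurableSet S) :
    (volume : Measure (Fin d → ℝ)).withDensity (fun y => ∏ i, lapD lam (y i))
        ((· + δ) ⁻¹' S) ≤
      ENNReal.ofReal (Real.exp ((∑ i, |δ i|) / lam)) *
        (volume : Measure (Fin d → ℝ)).withDensity (fun y => ∏ i, lapD lam (y i)) S := by
  have hH : Measurable fun y : Fin d → ℝ => ∏ i, lapD lam (y i) :=
    Finset.measurable_prod _ fun i _ => (measurable_lapD lam).comp (measurable_pi_apply i)
  have hSd : MeasurableSet ((· + δ) ⁻¹' S) := (measurable_add_const δ) hS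
  rw [withDensity_apply _ hSd, withDensity_apply _ hS]
  have key : ∫⁻ ε in (· + δ) ⁻¹' S, (∏ i, lapD lam (ε i)) ∂(volume : Measure (Fin d → ℝ))
      = ∫⁻ y in S, (∏ i, lapD lam (y i - δ i)) ∂(volume : Measure (Fin d → ℝ)) := by
    rw [← lintegral_indicator hSd, ← lintegral_indicator hS]
    have hG : ∀ ε : Fin d → ℝ,
        ((· + δ) ⁻¹' S).indicator (fun y => ∏ i, lapD lam (y i)) ε =
          S.indicator (fun y => ∏ i, lapD lam (y i - δ i)) (ε + δ) := by
      intro ε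
      by_cases h : ε + δ ∈ S
      · rw [indicator_of_mem h, indicator_of_mem (by exact h)]
        exact Finset.prod_congr rfl fun i _ => by simp
      · rw [indicator_of_notMem h, indicator_of_notMem (by exact h)]
    simp_rw [hG]
    exact lintegral_add_right_eq_self
      (S.indicator fun y => ∏ i, lapD lam (y i - δ i)) δ
  rw [key]
  calc ∫⁻ y in S, (∏ i, lapD lam (y i - δ i)) ∂(volume : Measure (Fin d → ℝ))
      ≤ ∫⁻ y in S, (ENNReal.ofReal (Real.exp ((∑ i, |δ i|) / lam)) * ∏ i, lapD lam (y i))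
          ∂(volume : Measure (Fin d → ℝ)) :=
        setLIntegral_mono (by fun_prop) fun y _ => prod_lapD_shift_le hlam δ y
    _ = ENNReal.ofReal (Real.exp ((∑ i, |δ i|) / lam)) *
          ∫⁻ y in S, (∏ i, lapD lam (y i)) ∂(volume : Measure (Fin d → ℝ)) :=
        lintegral_const_mul _ hH

/-- Certified robustness against `ℓ_1` perturbations with isotropic Laplace noise
of scale `λ` (density `t ↦ (2λ)⁻¹ exp(−|t|/λ)` per coordinate): the certified
radius is `−λ·log(2(1 − p_A))`. -/
theorem laplace_isotropic_certified_robustness_l1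
    {d : ℕ} (hd : 1 ≤ d)
    {C : Type} [Fintype C] [MeasurableSpace C] [MeasurableSingletonClass C]
    (lam : ℝ) (hlam : 0 < lam)
    (ν : Measure (Fin d → ℝ))
    (hν : ν = Measure.pi fun _ : Fin d =>
      volume.withDensity fun t : ℝ =>
        ENNReal.ofReal ((2 * lam)⁻¹ * Real.exp (-|t| / lam)))
    (f : (Fin d → ℝ) → C) (hf : Measurable f)
    (x : Fin d → ℝ) (cA : C) (pA : ℝ) (hpA : 1 / 2 < pA) (hpA' : pA < 1)
    (hA : pA ≤ (ν {ε | f (x + ε) = cA}).toReal)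
    (hB : ∀ c : C, c ≠ cA → (ν {ε | f (x + ε) = c}).toReal ≤ 1 - pA) :
    ∀ δ : Fin d → ℝ, (∑ i, |δ i|) < -lam * Real.log (2 * (1 - pA)) →
      ∀ c : C, c ≠ cA →
        (ν {ε | f (x + δ + ε) = c}).toReal <
          (ν {ε | f (x + δ + ε) = cA}).toReal := by
  have hνH : ν = (volume : Measure (Fin d → ℝ)).withDensity
      (fun y => ∏ i, lapD lam (y i)) := by
    rw [hν]; exact pi_lapD_eq lam
  have hprob : IsProbabilityMeasure ν := by
    constructor
    rw [hν, Measure.pi_univ]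
    have h1 : (volume : Measure ℝ).withDensity (lapD lam) univ = 1 := by
      rw [withDensity_apply _ MeasurableSet.univ, setLIntegral_univ]
      exact lintegral_lapD hlam
    exact Finset.prod_eq_one fun i _ => h1
  intro δ hδ c hc
  -- basic measurability
  have hmA : Measurable fun ε : Fin d → ℝ => f (x + ε) :=
    hf.comp (measurable_const.add measurable_id)
  have hmA2 : Measurable fun ε : Fin d → ℝ => f (x + δ + ε) :=
    hf.comp (measurable_const.add measurable_id)
  have mA : MeasurableSet {ε | f (x + ε) = cA} := hmA (measurableSet_singleton cA)
  have mA2 : MeasurableSet {ε | f (x + δ + ε) = cA} := hmA2 (measurableSet_singleton cA)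
  set S : Set (Fin d → ℝ) := {ε | f (x + ε) = cA}ᶜ with hS
  have mS : MeasurableSet S := mA.compl
  set L : ℝ := Real.exp ((∑ i, |δ i|) / lam) with hLdef
  -- ν S ≤ 1 - pA
  have hfin : ∀ s : Set (Fin d → ℝ), ν s ≠ ⊤ := fun s => measure_ne_top ν s
  have hSle : (ν S).toReal ≤ 1 - pA := by
    have h1 : ν S = 1 - ν {ε | f (x + ε) = cA} := prob_compl_eq_one_sub mA
    have h2 : ν {ε | f (x + ε) = cA} ≤ 1 := prob_le_one
    rw [h1, ENNReal.toReal_sub_of_le h2 ENNReal.one_ne_top, ENNReal.toReal_one]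
    linarith
  -- the shifted "not cA" set is the preimage of S
  have hsetT : {ε : Fin d → ℝ | f (x + δ + ε) = cA}ᶜ = (· + δ) ⁻¹' S := by
    ext ε
    have hx : x + δ + ε = x + (ε + δ) := by
      funext i; simp [add_assoc, add_comm, add_left_comm]
    simp [hS, hx]
  -- shift bound
  have hT : ν ({ε : Fin d → ℝ | f (x + δ + ε) = cA}ᶜ) ≤ ENNReal.ofReal L * ν S := by
    rw [hsetT, hνH]
    exact shift_bound hlam δ mS
  have hTfin : (ν ({ε : Fin d → ℝ | f (x + δ + ε) = cA}ᶜ)).toReal ≤ L * (ν S).toReal := by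
    calc (ν ({ε : Fin d → ℝ | f (x + δ + ε) = cA}ᶜ)).toReal
        ≤ (ENNReal.ofReal L * ν S).toReal :=
          ENNReal.toReal_mono (ENNReal.mul_ne_top ENNReal.ofReal_ne_top (hfin S)) hT
      _ = L * (ν S).toReal := by
          rw [ENNReal.toReal_mul, ENNReal.toReal_ofReal (exp_pos _).le]
  -- L * (1 - pA) < 1/2
  have h2a : (0:ℝ) < 2 * (1 - pA) := by linarith
  have hLlt : L < (2 * (1 - pA))⁻¹ := by
    rw [hLdef, ← Real.exp_log (inv_pos.2 h2a), Real.exp_lt_exp, Real.log_inv]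
    rw [div_lt_iff₀ hlam]
    linarith [hδ]
  have hhalf : L * (1 - pA) < 1 / 2 := by
    have h1pA : (0:ℝ) < 1 - pA := by linarith
    have h2 := mul_lt_mul_of_pos_right hLlt h1pA
    have heq : (2 * (1 - pA))⁻¹ * (1 - pA) = 1 / 2 := by
      field_simp
    linarith
  have hTlt : (ν ({ε : Fin d → ℝ | f (x + δ + ε) = cA}ᶜ)).toReal < 1 / 2 := by
    have h1pA : (0:ℝ) < 1 - pA := by linarith
    have : L * (ν S).toReal ≤ L * (1 - pA) :=
      mul_le_mul_of_nonneg_left hSle (exp_pos _).le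
    linarith
  -- conclude
  have hsub : {ε : Fin d → ℝ | f (x + δ + ε) = c} ⊆ {ε : Fin d → ℝ | f (x + δ + ε) = cA}ᶜ := by
    intro ε hε
    simp only [mem_setOf_eq, mem_compl_iff] at *
    rw [hε]; exact hc
  have hle : (ν {ε | f (x + δ + ε) = c}).toReal ≤
      (ν ({ε : Fin d → ℝ | f (x + δ + ε) = cA}ᶜ)).toReal :=
    ENNReal.toReal_mono (hfin _) (measure_mono hsub)
  have hsum : (ν {ε | f (x + δ + ε) = cA}).toReal +
      (ν ({ε : Fin d → ℝ | f (x + δ + ε) = cA}ᶜ)).toReal = 1 := by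
    have := measure_add_measure_compl (μ := ν) mA2
    have h := congrArg ENNReal.toReal this
    rwa [ENNReal.toReal_add (hfin _) (hfin _), measure_univ, ENNReal.toReal_one] at h
  linarith
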